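/- Let T and R be aperiodic Borel automorphisms of a standard Borel space (X, 𝓑). Then for every ε > 0 and any finite list of Borel probability measures μ₁, …, μ_k on X there exists a Borel automorphism S of X such that μᵢ(E(S⁻¹ T S, R)) < ε for every i = 1, …, k. That is, the conjugacy class {S⁻¹ T S : S ∈ Aut(X, 𝓑)} of any aperiodic T is dense in the set of aperiodic Borel automorphisms with respect to the uniform topology τ. -/

import Mathlib

open MeasureTheory Set Function
open scoped ENNReal

set_option linter.unusedSectionVars false

namespace Stmt5

variable {X : Type*} [MeasurableSpace X] [StandardBorelSpace X]

section Iter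

variable (e : X ≃ᵐ X)

lemma iter_symm_apply (n : ℕ) (x : X) : (⇑e.symm)^[n] ((⇑e)^[n] x) = x :=
  (Function.LeftInverse.iterate e.symm_apply_apply n) x

lemma iter_apply_symm (n : ℕ) (x : X) : (⇑e)^[n] ((⇑e.symm)^[n] x) = x :=
  (Function.LeftInverse.iterate e.apply_symm_apply n) x

lemma iter_cancel {j i : ℕ} (h : j ≤ i) (x : X) :
    (⇑e)^[j] ((⇑e.symm)^[i] x) = (⇑e.symm)^[i - j] x := by
  conv_lhs => rw [show i = j + (i - j) by omega, Function.iterate_add_apply]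
  exact iter_apply_symm e j _

lemma iter_cancel' {j i : ℕ} (h : j ≤ i) (x : X) :
    (⇑e.symm)^[j] ((⇑e)^[i] x) = (⇑e)^[i - j] x := by
  conv_lhs => rw [show i = j + (i - j) by omega, Function.iterate_add_apply]
  exact iter_symm_apply e j _

lemma iter_image (n : ℕ) (E : Set X) : (⇑e)^[n] '' E = (⇑e.symm)^[n] ⁻¹' E := by
  ext x
  constructor
  · rintro ⟨y, hy, rfl⟩
    simpa [Set.mem_preimage, iter_symm_apply] using hy
  · intro hx
    exact ⟨(⇑e.symm)^[n] x, hx, iter_apply_symm e n x⟩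

lemma meas_iter (n : ℕ) : Measurable ((⇑e)^[n]) := e.measurable.iterate n

lemma meas_iter_symm (n : ℕ) : Measurable ((⇑e.symm)^[n]) := e.symm.measurable.iterate n

variable {e} (he : ∀ x : X, ∀ n : ℕ, 1 ≤ n → (⇑e)^[n] x ≠ x)

include he

lemma ape_iter_inj {i j : ℕ} {x : X} (h : (⇑e)^[i] x = (⇑e)^[j] x) : i = j := by
  rcases le_total i j with hle | hle
  · by_contra hne
    have h2 : (⇑e)^[j - i] ((⇑e)^[i] x) = (⇑e)^[i] x := by
      rw [← Function.iterate_add_apply]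
      rw [show j - i + i = j by omega]
      exact h.symm
    exact he _ (j - i) (by omega) h2
  · by_contra hne
    have h2 : (⇑e)^[i - j] ((⇑e)^[j] x) = (⇑e)^[j] x := by
      rw [← Function.iterate_add_apply]
      rw [show i - j + j = i by omega]
      exact h
    exact he _ (i - j) (by omega) h2

lemma ape_symm {x : X} {n : ℕ} (hn : 1 ≤ n) : (⇑e.symm)^[n] x ≠ x := by
  intro h
  have : (⇑e)^[n] x = x := by
    conv_lhs => rw [← h]
    exact iter_apply_symm e n x
  exact he x n hn this

lemma ape_mixed {i j : ℕ} {x : X} (h : (⇑e)^[i] x = (⇑e.symm)^[j] x) : i = 0 ∧ j = 0 := by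
  have h2 : (⇑e)^[j] ((⇑e)^[i] x) = x := by rw [h]; exact iter_apply_symm e j x
  rw [← Function.iterate_add_apply] at h2
  have := he x (j + i)
  have hji : j + i = 0 := by
    by_contra hne
    exact this (by omega) h2
  omega

end Iter

section Big

variable (X) in
/-- `Big s`: `s` has the same cardinality class as the (infinite) ambient space. -/
def Big (s : Set X) : Prop :=
  (¬ Countable ↥s) ∨ (Countable X ∧ Infinite ↥s)

variable {s t : Set X}

lemma not_big_iff : ¬ Big X s ↔ Countable ↥s ∧ (Countable X → Finite ↥s) := by
  unfold Big
  rw [not_or, not_not, not_and]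
  simp [not_infinite_iff_finite]

lemma Big.mono (hst : s ⊆ t) (hs : Big X s) : Big X t := by
  rcases hs with h | ⟨hX, h⟩
  · exact Or.inl fun hc =>
      h (Set.countable_coe_iff.mpr ((Set.countable_coe_iff.mp hc).mono hst))
  · exact Or.inr ⟨hX, Set.infinite_coe_iff.mpr ((Set.infinite_coe_iff.mp h).mono hst)⟩

lemma not_big_empty : ¬ Big X (∅ : Set X) := by
  rw [not_big_iff]
  exact ⟨inferInstance, fun _ => inferInstance⟩

lemma big_union_or (h : Big X (s ∪ t)) : Big X s ∨ Big X t := by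
  by_contra hc
  push_neg at hc
  obtain ⟨hs, ht⟩ := hc
  rw [not_big_iff] at hs ht
  have hnot : ¬ Big X (s ∪ t) := by
    rw [not_big_iff]
    refine ⟨Set.countable_coe_iff.mpr ((Set.countable_coe_iff.mp hs.1).union
      (Set.countable_coe_iff.mp ht.1)), fun hX => ?_⟩
    rw [Set.finite_coe_iff]
    exact (Set.finite_coe_iff.mp (hs.2 hX)).union (Set.finite_coe_iff.mp (ht.2 hX))
  exact hnot h

lemma big_biUnion {ι : Type*} {f : ι → Set X} {I : Finset ι}
    (h : Big X (⋃ i ∈ I, f i)) : ∃ i ∈ I, Big X (f i) := by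
  classical
  induction I using Finset.induction with
  | empty => exact absurd h (by simpa using not_big_empty)
  | @insert a sI ha ih =>
      rw [Finset.set_biUnion_insert] at h
      rcases big_union_or h with h | h
      · exact ⟨a, Finset.mem_insert_self a sI, h⟩
      · obtain ⟨i, hi, hb⟩ := ih h
        exact ⟨i, Finset.mem_insert_of_mem hi, hb⟩

lemma big_univ [Infinite X] : Big X (Set.univ : Set X) := by
  by_cases hX : Countable X
  · exact Or.inr ⟨hX, Set.infinite_coe_iff.mpr Set.infinite_univ⟩
  · exact Or.inl fun hc => hX (Set.countable_univ_iff.mp (Set.countable_coe_iff.mp hc))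

lemma big_range [Infinite X] {f : X → X} (hf : Function.Injective f) : Big X (Set.range f) := by
  by_cases hX : Countable X
  · exact Or.inr ⟨hX, Set.infinite_coe_iff.mpr (Set.infinite_range_of_injective hf)⟩
  · refine Or.inl fun hc => hX ?_
    have : Countable X := (Equiv.ofInjective f hf).countable_iff.mpr hc
    exact this

lemma big_of_image {f : X → X} (hf : Function.Injective f) {s : Set X}
    (h : Big X (f '' s)) : Big X s := by
  rcases h with h | ⟨hX, h⟩
  · refine Or.inl fun hc => h ?_
    exact Set.countable_coe_iff.mpr ((Set.countable_coe_iff.mp hc).image f)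
  · refine Or.inr ⟨hX, Set.infinite_coe_iff.mpr ?_⟩
    exact Set.Infinite.of_image f (Set.infinite_coe_iff.mp h)

end Big

section Iso

lemma isoT {α β : Type*} [MeasurableSpace α] [StandardBorelSpace α]
    [MeasurableSpace β] [StandardBorelSpace β]
    (h : (Countable α ∧ Countable β ∧ Infinite α ∧ Infinite β) ∨ (¬Countable α ∧ ¬Countable β)) :
    Nonempty (α ≃ᵐ β) := by
  rcases h with ⟨h1, h2, h3, h4⟩ | ⟨h1, h2⟩
  · obtain ⟨da⟩ := nonempty_denumerable_iff.mpr ⟨h1, h3⟩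
    obtain ⟨db⟩ := nonempty_denumerable_iff.mpr ⟨h2, h4⟩
    exact ⟨⟨(@Denumerable.eqv α da).trans (@Denumerable.eqv β db).symm,
      measurable_of_countable _, measurable_of_countable _⟩⟩
  · exact ⟨PolishSpace.measurableEquivOfNotCountable h1 h2⟩

lemma big_iso_prod [Infinite X] {s : Set X} (hs : MeasurableSet s) (hb : Big X s) :
    Nonempty (↥s ≃ᵐ (ℕ × X)) := by
  have : StandardBorelSpace ↥s := hs.standardBorel
  by_cases hX : Countable X
  · have hsinf : Infinite ↥s := by
      rcases hb with h | ⟨_, h⟩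
      · exact absurd (inferInstance : Countable ↥s) h
      · exact h
    exact isoT (Or.inl ⟨inferInstance, inferInstance, hsinf, inferInstance⟩)
  · have hsnc : ¬ Countable ↥s := by
      rcases hb with h | ⟨h, _⟩
      · exact h
      · exact absurd h hX
    refine isoT (Or.inr ⟨hsnc, fun h => hX ?_⟩)
    exact Function.Injective.countable (f := fun x : X => ((0 : ℕ), x))
      (fun a b hab => congrArg Prod.snd hab)

lemma big_iso [Infinite X] {s t : Set X} (hs : MeasurableSet s) (ht : MeasurableSet t)
    (hbs : Big X s) (hbt : Big X t) : Nonempty (↥s ≃ᵐ ↥t) := by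
  obtain ⟨es⟩ := big_iso_prod hs hbs
  obtain ⟨et⟩ := big_iso_prod ht hbt
  exact ⟨es.trans et.symm⟩

end Iso

section Marker

variable (e : X ≃ᵐ X)

/-- `M`-discreteness of a set under the automorphism `e`. -/
def Disc (M : ℕ) (s : Set X) : Prop :=
  ∀ x ∈ s, ∀ j : ℕ, 0 < j → j < M → (⇑e)^[j] x ∉ s

lemma exists_coloring (he : ∀ x : X, ∀ n : ℕ, 1 ≤ n → (⇑e)^[n] x ≠ x) (M : ℕ) :
    ∃ C : ℕ → Set X, (∀ n, MeasurableSet (C n)) ∧ (∀ n, Disc e M (C n)) ∧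
      (⋃ n, C n) = Set.univ := by
  classical
  obtain ⟨S, hSc, hSm, hSsep⟩ := exists_countable_separating X MeasurableSet Set.univ
  have hS'c : (insert (∅ : Set X) S).Countable := hSc.insert _
  obtain ⟨u, hu⟩ := Set.Countable.exists_eq_range hS'c ⟨∅, Set.mem_insert _ _⟩
  have hum : ∀ n, MeasurableSet (u n) := by
    intro n
    have : u n ∈ insert (∅ : Set X) S := hu ▸ Set.mem_range_self n
    rcases this with h | h
    · rw [h]; exact MeasurableSet.empty
    · exact hSm _ h
  have key : ∀ x y : X, y ≠ x →
      ∃ n, (x ∈ u n ∧ y ∉ u n) ∨ (x ∉ u n ∧ y ∈ u n) := by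
    intro x y hne
    by_contra hc
    push_neg at hc
    refine hne (hSsep y (Set.mem_univ y) x (Set.mem_univ x) fun s hs => ?_)
    have : s ∈ insert (∅ : Set X) S := Set.mem_insert_of_mem _ hs
    rw [hu] at this
    obtain ⟨n, rfl⟩ := this
    have h1 := hc n
    tauto
  -- the sets V indexed by pairs of finsets
  set V : Finset ℕ × Finset ℕ → Set X := fun st =>
    (⋂ n ∈ st.1, u n) ∩ (⋂ n ∈ st.2, (u n)ᶜ) with hV
  have hVm : ∀ st, MeasurableSet (V st) := by
    intro st
    refine MeasurableSet.inter ?_ ?_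
    · exact MeasurableSet.biInter (Set.to_countable _) fun n _ => hum n
    · exact MeasurableSet.biInter (Set.to_countable _) fun n _ => (hum n).compl
  set C : Finset ℕ × Finset ℕ → Set X := fun st =>
    V st ∩ ⋂ j ∈ Finset.Ioo 0 M,
      (((⇑e)^[j] ⁻¹' (V st)ᶜ) ∩ ((⇑e.symm)^[j] ⁻¹' (V st)ᶜ)) with hC
  have hCm : ∀ st, MeasurableSet (C st) := by
    intro st
    refine (hVm st).inter ?_
    refine MeasurableSet.biInter (Set.to_countable _) fun j _ => ?_
    exact ((meas_iter e j) (hVm st).compl).inter ((meas_iter_symm e j) (hVm st).compl)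
  have hCmem : ∀ st x, x ∈ C st ↔ x ∈ V st ∧
      ∀ j : ℕ, 0 < j → j < M → (⇑e)^[j] x ∉ V st ∧ (⇑e.symm)^[j] x ∉ V st := by
    intro st x
    simp only [hC, Set.mem_inter_iff, Set.mem_iInter, Finset.mem_Ioo, Set.mem_preimage,
      Set.mem_compl_iff, and_imp]
  have hCdisc : ∀ st, Disc e M (C st) := by
    intro st x hx j hj0 hjM hy
    have h1 := ((hCmem st x).mp hx).2 j hj0 hjM
    exact h1.1 ((hCmem st _).mp hy).1
  have hCcov : ∀ x, ∃ st, x ∈ C st := by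
    intro x
    have hne1 : ∀ j : ℕ, 0 < j → (⇑e)^[j] x ≠ x := fun j hj => he x j hj
    have hne2 : ∀ j : ℕ, 0 < j → (⇑e.symm)^[j] x ≠ x := fun j hj => ape_symm he hj
    choose n1 hn1 using fun j (hj : j ∈ Finset.Ioo 0 M) =>
      key x ((⇑e)^[j] x) (hne1 j (Finset.mem_Ioo.mp hj).1)
    choose n2 hn2 using fun j (hj : j ∈ Finset.Ioo 0 M) =>
      key x ((⇑e.symm)^[j] x) (hne2 j (Finset.mem_Ioo.mp hj).1)
    set picks : Finset ℕ :=
      (Finset.Ioo 0 M).attach.image (fun j => n1 j.1 j.2) ∪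
      (Finset.Ioo 0 M).attach.image (fun j => n2 j.1 j.2) with hpicks
    refine ⟨⟨picks.filter (fun n => x ∈ u n), picks.filter (fun n => x ∉ u n)⟩, ?_⟩
    rw [hCmem]
    constructor
    · constructor
      · simp only [Set.mem_iInter]
        intro n hn
        exact (Finset.mem_filter.mp hn).2
      · simp only [Set.mem_iInter, Set.mem_compl_iff]
        intro n hn
        exact (Finset.mem_filter.mp hn).2
    · intro j hj0 hjM
      have hjmem : j ∈ Finset.Ioo 0 M := Finset.mem_Ioo.mpr ⟨hj0, hjM⟩
      constructor
      · rcases hn1 j hjmem with ⟨hxu, hyu⟩ | ⟨hxu, hyu⟩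
        · intro hy
          have hmem : n1 j hjmem ∈ picks := by
            rw [hpicks]
            exact Finset.mem_union_left _ (Finset.mem_image.mpr ⟨⟨j, hjmem⟩, Finset.mem_attach _ _, rfl⟩)
          have : (⇑e)^[j] x ∈ ⋂ n ∈ (picks.filter (fun n => x ∈ u n)), u n := hy.1
          simp only [Set.mem_iInter] at this
          exact hyu (this _ (Finset.mem_filter.mpr ⟨hmem, hxu⟩))
        · intro hy
          have hmem : n1 j hjmem ∈ picks := by
            rw [hpicks]
            exact Finset.mem_union_left _ (Finset.mem_image.mpr ⟨⟨j, hjmem⟩, Finset.mem_attach _ _, rfl⟩)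
          have : (⇑e)^[j] x ∈ ⋂ n ∈ (picks.filter (fun n => x ∉ u n)), (u n)ᶜ := hy.2
          simp only [Set.mem_iInter, Set.mem_compl_iff] at this
          exact this _ (Finset.mem_filter.mpr ⟨hmem, hxu⟩) hyu
      · rcases hn2 j hjmem with ⟨hxu, hyu⟩ | ⟨hxu, hyu⟩
        · intro hy
          have hmem : n2 j hjmem ∈ picks := by
            rw [hpicks]
            exact Finset.mem_union_right _ (Finset.mem_image.mpr ⟨⟨j, hjmem⟩, Finset.mem_attach _ _, rfl⟩)
          have : (⇑e.symm)^[j] x ∈ ⋂ n ∈ (picks.filter (fun n => x ∈ u n)), u n := hy.1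
          simp only [Set.mem_iInter] at this
          exact hyu (this _ (Finset.mem_filter.mpr ⟨hmem, hxu⟩))
        · intro hy
          have hmem : n2 j hjmem ∈ picks := by
            rw [hpicks]
            exact Finset.mem_union_right _ (Finset.mem_image.mpr ⟨⟨j, hjmem⟩, Finset.mem_attach _ _, rfl⟩)
          have : (⇑e.symm)^[j] x ∈ ⋂ n ∈ (picks.filter (fun n => x ∉ u n)), (u n)ᶜ := hy.2
          simp only [Set.mem_iInter, Set.mem_compl_iff] at this
          exact this _ (Finset.mem_filter.mpr ⟨hmem, hxu⟩) hyu
  obtain ⟨g, hg⟩ := exists_surjective_nat (Finset ℕ × Finset ℕ)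
  refine ⟨C ∘ g, fun n => hCm (g n), fun n => hCdisc (g n), ?_⟩
  ext x
  simp only [Set.mem_iUnion, Set.mem_univ, iff_true, Function.comp_apply]
  obtain ⟨st, hst⟩ := hCcov x
  obtain ⟨n, rfl⟩ := hg st
  exact ⟨n, hst⟩

end Marker

section Greedy

variable (e : X ≃ᵐ X)

/-- the `M`-neighborhood of a set along orbits of `e` -/
def Nb (M : ℕ) (s : Set X) : Set X :=
  ⋃ j ∈ Finset.range M, (((⇑e.symm)^[j] ⁻¹' s) ∪ ((⇑e)^[j] ⁻¹' s))

lemma mem_Nb {M : ℕ} {s : Set X} {x : X} :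
    x ∈ Nb e M s ↔ ∃ j, j < M ∧ ((⇑e.symm)^[j] x ∈ s ∨ (⇑e)^[j] x ∈ s) := by
  simp only [Nb, Set.mem_iUnion, Finset.mem_range, Set.mem_union, Set.mem_preimage,
    exists_prop]

lemma Nb_meas {M : ℕ} {s : Set X} (hs : MeasurableSet s) : MeasurableSet (Nb e M s) := by
  refine MeasurableSet.biUnion (Set.to_countable _) fun j _ => ?_
  exact ((meas_iter_symm e j) hs).union ((meas_iter e j) hs)

/-- cumulative union in the greedy construction of a maximal discrete set -/
def greedyU (M : ℕ) (C : ℕ → Set X) : ℕ → Set X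
  | 0 => ∅
  | n + 1 => greedyU M C n ∪ (C n \ Nb e M (greedyU M C n))

lemma exists_marker (he : ∀ x : X, ∀ n : ℕ, 1 ≤ n → (⇑e)^[n] x ≠ x) (M : ℕ) (hM : 1 ≤ M) :
    ∃ A : Set X, MeasurableSet A ∧ Disc e M A ∧
      ∀ x, ∃ j, j < M ∧ ((⇑e)^[j] x ∈ A ∨ (⇑e.symm)^[j] x ∈ A) := by
  obtain ⟨C, hCm, hCd, hCu⟩ := exists_coloring e he M
  set U := greedyU e M C with hU
  set B : ℕ → Set X := fun n => C n \ Nb e M (U n) with hB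
  have hUsucc : ∀ n, U (n + 1) = U n ∪ B n := fun n => rfl
  have hUm : ∀ n, MeasurableSet (U n) := by
    intro n
    induction n with
    | zero => exact MeasurableSet.empty
    | succ n ih => exact ih.union ((hCm n).diff (Nb_meas e ih))
  have hBm : ∀ n, MeasurableSet (B n) := fun n => (hCm n).diff (Nb_meas e (hUm n))
  have hUmono : ∀ m n, m ≤ n → U m ⊆ U n := by
    intro m n hmn
    induction n with
    | zero => rw [Nat.le_zero.mp hmn]
    | succ n ih =>
        rcases Nat.lt_or_ge m (n+1) with h | h
        · exact (ih (by omega)).trans (by rw [hUsucc]; exact Set.subset_union_left)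
        · rw [show m = n + 1 by omega]
  set A : Set X := ⋃ n, B n with hA
  have hBA : ∀ n, B n ⊆ A := fun n => Set.subset_iUnion B n
  have hUA : ∀ n, U n ⊆ A := by
    intro n
    induction n with
    | zero => exact Set.empty_subset A
    | succ n ih => rw [hUsucc]; exact Set.union_subset ih (hBA n)
  have hBU : ∀ m n, m < n → B m ⊆ U n := by
    intro m n hmn
    refine Set.Subset.trans ?_ (hUmono (m+1) n hmn)
    rw [hUsucc]
    exact Set.subset_union_right
  refine ⟨A, MeasurableSet.iUnion hBm, ?_, ?_⟩
  · -- discreteness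
    intro x hx j hj0 hjM hy
    obtain ⟨n, hxn⟩ := Set.mem_iUnion.mp hx
    obtain ⟨m, hym⟩ := Set.mem_iUnion.mp hy
    rcases Nat.lt_trichotomy n m with h | h | h
    · -- x ∈ B n ⊆ U m, y ∉ Nb (U m) but e.symm^[j] y = x ∈ U m
      have hxU : x ∈ U m := hBU n m h hxn
      refine hym.2 ((mem_Nb (e := e)).mpr ⟨j, hjM, Or.inl ?_⟩)
      rw [iter_symm_apply]
      exact hxU
    · subst h
      exact hCd n x hxn.1 j hj0 hjM hym.1
    · have hyU : (⇑e)^[j] x ∈ U n := hBU m n h hym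
      exact hxn.2 ((mem_Nb (e := e)).mpr ⟨j, hjM, Or.inr hyU⟩)
  · -- completeness
    intro x
    have : x ∈ ⋃ n, C n := hCu ▸ Set.mem_univ x
    obtain ⟨n, hxn⟩ := Set.mem_iUnion.mp this
    by_cases hnb : x ∈ Nb e M (U n)
    · obtain ⟨j, hjM, hj⟩ := (mem_Nb (e := e)).mp hnb
      rcases hj with hj | hj
      · exact ⟨j, hjM, Or.inr (hUA n hj)⟩
      · exact ⟨j, hjM, Or.inl (hUA n hj)⟩
    · exact ⟨0, by omega, Or.inl (hBA n ⟨hxn, hnb⟩)⟩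

end Greedy

section Levels

open Classical in
/-- auxiliary: a measurable-cases helper -/
lemma measurable_nat_cases {Y : Type*} [MeasurableSpace Y] {f : ℕ → X → Y}
    (hf : ∀ n, Measurable (f n)) {g : X → ℕ} (hg : Measurable g) :
    Measurable fun x => f (g x) x := by
  intro E hE
  have heq : (fun x => f (g x) x) ⁻¹' E = ⋃ n : ℕ, (g ⁻¹' {n} ∩ (f n) ⁻¹' E) := by
    ext x
    simp only [Set.mem_preimage, Set.mem_iUnion, Set.mem_inter_iff, Set.mem_singleton_iff]
    constructor
    · intro h
      exact ⟨g x, rfl, h⟩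
    · rintro ⟨n, rfl, h⟩
      exact h
  rw [heq]
  exact MeasurableSet.iUnion fun n => (hg (measurableSet_singleton n)).inter (hf n hE)

variable (e : X ≃ᵐ X) {A : Set X}

variable (hex : ∀ x : X, ∃ j, (⇑e.symm)^[j] x ∈ A)
variable (hex' : ∀ x : X, ∃ j, 0 < j ∧ (⇑e)^[j] x ∈ A)

open Classical in
/-- distance down to the base point of the tower containing `x` -/
noncomputable def bfun (x : X) : ℕ := Nat.find (hex x)

open Classical in
/-- first-return time to `A` -/
noncomputable def gfun (x : X) : ℕ := Nat.find (hex' x)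

/-- base point of the tower containing `x` -/
noncomputable def basefun (x : X) : X := (⇑e.symm)^[bfun e hex x] x

open Classical

lemma bfun_spec (x : X) : (⇑e.symm)^[bfun e hex x] x ∈ A := Nat.find_spec (hex x)

lemma basefun_mem (x : X) : basefun e hex x ∈ A := bfun_spec e hex x

lemma bfun_min {x : X} {j : ℕ} (hj : j < bfun e hex x) : (⇑e.symm)^[j] x ∉ A :=
  Nat.find_min (hex x) hj

lemma gfun_pos (x : X) : 0 < gfun e hex' x := (Nat.find_spec (hex' x)).1

lemma gfun_spec (x : X) : (⇑e)^[gfun e hex' x] x ∈ A := (Nat.find_spec (hex' x)).2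

lemma gfun_min {x : X} {j : ℕ} (hj0 : 0 < j) (hj : j < gfun e hex' x) : (⇑e)^[j] x ∉ A :=
  fun h => Nat.find_min (hex' x) hj ⟨hj0, h⟩

lemma bfun_zero_iff (x : X) : bfun e hex x = 0 ↔ x ∈ A := by
  unfold bfun
  rw [Nat.find_eq_zero]
  simp

lemma iter_apply_basefun (x : X) : (⇑e)^[bfun e hex x] (basefun e hex x) = x :=
  iter_apply_symm e _ x

lemma bfun_lt_gfun (x : X) : bfun e hex x < gfun e hex' (basefun e hex x) := by
  set b := bfun e hex x with hb
  set a := basefun e hex x with ha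
  by_contra hc
  push_neg at hc
  -- gfun a ≤ b
  have h1 : (⇑e)^[gfun e hex' a] a ∈ A := gfun_spec e hex' a
  have h2 : (⇑e)^[gfun e hex' a] a = (⇑e.symm)^[b - gfun e hex' a] x := by
    rw [ha]
    unfold basefun
    rw [← hb]
    exact iter_cancel e hc x
  rw [h2] at h1
  exact bfun_min e hex (by have := gfun_pos e hex' a; omega) h1

lemma bfun_step {x : X} (hx : e x ∉ A) :
    bfun e hex (e x) = bfun e hex x + 1 ∧ basefun e hex (e x) = basefun e hex x := by
  set b := bfun e hex x with hb
  have hid : ∀ j : ℕ, (⇑e.symm)^[j + 1] (e x) = (⇑e.symm)^[j] x := by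
    intro j
    rw [Function.iterate_succ_apply]
    simp
  have hprop : (⇑e.symm)^[b + 1] (e x) ∈ A := by
    rw [hid b]
    exact bfun_spec e hex x
  have hle : bfun e hex (e x) ≤ b + 1 := Nat.find_min' (hex (e x)) hprop
  have hgt : ¬ bfun e hex (e x) ≤ b := by
    intro hc
    have hspec := bfun_spec e hex (e x)
    rcases Nat.eq_zero_or_pos (bfun e hex (e x)) with h0 | hpos
    · rw [h0] at hspec
      exact hx hspec
    · have : bfun e hex (e x) = (bfun e hex (e x) - 1) + 1 := by omega
      rw [this, hid _] at hspec
      exact bfun_min e hex (by omega) hspec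
  have hbeq : bfun e hex (e x) = b + 1 := by omega
  refine ⟨hbeq, ?_⟩
  unfold basefun
  rw [hbeq, hid b, ← hb]

lemma top_mem {x : X} (hbg : bfun e hex x + 1 = gfun e hex' (basefun e hex x)) :
    e x ∈ A := by
  have h1 : e x = (⇑e)^[bfun e hex x + 1] (basefun e hex x) := by
    rw [Function.iterate_succ_apply']
    rw [iter_apply_basefun]
  rw [h1, hbg]
  exact gfun_spec e hex' _

lemma base_iter {a : X} (ha : a ∈ A) {i : ℕ} (hi : i < gfun e hex' a) :
    bfun e hex ((⇑e)^[i] a) = i ∧ basefun e hex ((⇑e)^[i] a) = a := by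
  induction i with
  | zero =>
      have h0 : (⇑e)^[0] a = a := rfl
      rw [h0]
      refine ⟨(bfun_zero_iff e hex a).mpr ha, ?_⟩
      unfold basefun
      rw [(bfun_zero_iff e hex a).mpr ha]
      rfl
  | succ i ih =>
      have hi' : i < gfun e hex' a := by omega
      obtain ⟨hb, hbase⟩ := ih hi'
      have hy : (⇑e)^[i+1] a = e ((⇑e)^[i] a) := Function.iterate_succ_apply' _ _ _
      have hnot : e ((⇑e)^[i] a) ∉ A := by
        rw [← hy]
        exact gfun_min e hex' (by omega) hi
      obtain ⟨h1, h2⟩ := bfun_step e hex (x := (⇑e)^[i] a) hnot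
      rw [hy]
      exact ⟨by rw [h1, hb], by rw [h2, hbase]⟩

lemma bfun_meas (hA : MeasurableSet A) : Measurable (bfun e hex) := by
  unfold bfun
  exact measurable_find _ fun k => (meas_iter_symm e k) hA

lemma basefun_meas (hA : MeasurableSet A) : Measurable (basefun e hex) := by
  unfold basefun
  exact measurable_nat_cases (fun n => meas_iter_symm e n) (bfun_meas e hex hA)

lemma gfun_meas (hA : MeasurableSet A) : Measurable (gfun e hex') := by
  unfold gfun
  refine measurable_find _ fun k => ?_
  by_cases hk : 0 < k
  · simp only [hk, true_and]
    exact (meas_iter e k) hA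
  · simp only [hk, false_and]
    exact MeasurableSet.empty
lemma bfun_le {x : X} {j : ℕ} (hjA : (⇑e.symm)^[j] x ∈ A) : bfun e hex x ≤ j :=
  Nat.find_min' _ hjA

lemma gfun_le {x : X} {j : ℕ} (hj0 : 0 < j) (hjA : (⇑e)^[j] x ∈ A) : gfun e hex' x ≤ j :=
  Nat.find_min' _ ⟨hj0, hjA⟩

lemma gfun_ge {M : ℕ} (hAd : Disc e M A) {a : X} (ha : a ∈ A) : M ≤ gfun e hex' a := by
  by_contra h
  push_neg at h
  exact hAd a ha _ (gfun_pos e hex' a) h (gfun_spec e hex' a)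

lemma basefun_of_mem {a : X} (ha : a ∈ A) : basefun e hex a = a := by
  unfold basefun
  rw [(bfun_zero_iff e hex a).mpr ha]
  rfl

end Levels

section MoreTools

lemma measEquiv_of_bijective (f : X → X) (hf : Measurable f) (hbij : Function.Bijective f) :
    ∃ e : X ≃ᵐ X, ⇑e = f := by
  have hemb : MeasurableEmbedding f := hf.measurableEmbedding hbij.1
  refine ⟨⟨Equiv.ofBijective f hbij, hf, ?_⟩, rfl⟩
  intro E hE
  have himg : ⇑(Equiv.ofBijective f hbij).symm ⁻¹' E = f '' E := by
    ext y
    simp only [Set.mem_preimage, Set.mem_image]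
    constructor
    · intro hy
      exact ⟨(Equiv.ofBijective f hbij).symm y, hy,
        (Equiv.ofBijective f hbij).apply_symm_apply y⟩
    · rintro ⟨x, hx, rfl⟩
      rw [show (Equiv.ofBijective f hbij).symm (f x) = x from
        ((Equiv.ofBijective f hbij).symm_apply_apply x)]
      exact hx
  rw [himg]
  exact hemb.measurableSet_image.mpr hE

lemma exists_big_disc [Infinite X] (e : X ≃ᵐ X)
    (he : ∀ x : X, ∀ n : ℕ, 1 ≤ n → (⇑e)^[n] x ≠ x) (M₂ : ℕ) (hM₂ : 1 ≤ M₂) :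
    ∃ D : Set X, MeasurableSet D ∧ Disc e M₂ D ∧ Big X D := by
  by_cases hX : Countable X
  · obtain ⟨x₀⟩ := (inferInstance : Nonempty X)
    set f : ℕ → X := fun n => (⇑e)^[n * M₂] x₀ with hf
    have hfinj : Function.Injective f := by
      intro a b hab
      have := ape_iter_inj he hab
      exact Nat.eq_of_mul_eq_mul_right (by omega) this
    refine ⟨Set.range f, (Set.countable_range f).measurableSet, ?_, ?_⟩
    · rintro x ⟨a, rfl⟩ j hj0 hjM hy
      obtain ⟨b, hb⟩ := hy
      rw [hf] at hb
      simp only at hb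
      rw [← Function.iterate_add_apply] at hb
      have heq : b * M₂ = j + a * M₂ := ape_iter_inj he hb
      by_cases hba : b ≤ a
      · have : b * M₂ ≤ a * M₂ := Nat.mul_le_mul_right _ hba
        omega
      · have : (a + 1) * M₂ ≤ b * M₂ := Nat.mul_le_mul_right _ (by omega)
        rw [Nat.add_mul, one_mul] at this
        omega
    · exact Or.inr ⟨hX, Set.infinite_coe_iff.mpr (Set.infinite_range_of_injective hfinj)⟩
  · obtain ⟨C, hCm, hCd, hCu⟩ := exists_coloring e he M₂
    have : ∃ n, ¬ Countable ↥(C n) := by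
      by_contra hc
      push_neg at hc
      refine hX ?_
      have : (Set.univ : Set X).Countable := by
        rw [← hCu]
        exact Set.countable_iUnion fun n => Set.countable_coe_iff.mp (hc n)
      exact Set.countable_univ_iff.mp this
    obtain ⟨n, hn⟩ := this
    exact ⟨C n, hCm n, hCd n, Or.inl hn⟩

lemma off_inj {L i L' i' : ℕ} (hi : i < L) (hi' : i' < L')
    (h : 1 + L * L + i = 1 + L' * L' + i') : L = L' ∧ i = i' := by
  rcases Nat.lt_trichotomy L L' with hLL | hLL | hLL
  · exfalso
    have h1 : L * L + i < L * L + L := by omega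
    have h2 : L * L + L < (L + 1) * (L + 1) := by nlinarith
    have h3 : (L + 1) * (L + 1) ≤ L' * L' := Nat.mul_le_mul (by omega) (by omega)
    omega
  · constructor
    · exact hLL
    · subst hLL; omega
  · exfalso
    have h1 : L' * L' + i' < L' * L' + L' := by omega
    have h2 : L' * L' + L' < (L' + 1) * (L' + 1) := by nlinarith
    have h3 : (L' + 1) * (L' + 1) ≤ L * L := Nat.mul_le_mul (by omega) (by omega)
    omega

lemma pigeonhole {q : ℕ → ℝ≥0∞} {Mn : ℕ} {C δ : ℝ≥0∞}
    (h : ∑ t ∈ Finset.range Mn, q t ≤ C) (hlt : C < Mn • δ) : ∃ t, t < Mn ∧ q t < δ := by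
  by_contra hc
  push_neg at hc
  have : Mn • δ ≤ ∑ t ∈ Finset.range Mn, q t := by
    calc Mn • δ = ∑ _t ∈ Finset.range Mn, δ := by
          rw [Finset.sum_const, Finset.card_range]
      _ ≤ ∑ t ∈ Finset.range Mn, q t :=
          Finset.sum_le_sum fun t ht => hc t (Finset.mem_range.mp ht)
  exact absurd (this.trans h) (not_le.mpr hlt)

end MoreTools

section Translate

variable (e : X ≃ᵐ X)

lemma iter_comm (j t : ℕ) (x : X) :
    (⇑e)^[j] ((⇑e.symm)^[t] x) = (⇑e.symm)^[t] ((⇑e)^[j] x) := by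
  rcases le_total j t with h | h
  · rw [iter_cancel e h]
    conv_rhs => rw [show t = (t - j) + j by omega, Function.iterate_add_apply]
    rw [iter_symm_apply]
  · rw [iter_cancel' e h]
    conv_lhs => rw [show j = (j - t) + t by omega, Function.iterate_add_apply]
    rw [iter_apply_symm]

lemma marker_translate {M : ℕ} {A : Set X} (hAm : MeasurableSet A) (hAd : Disc e M A)
    (hAc : ∀ x, ∃ j, j < M ∧ ((⇑e)^[j] x ∈ A ∨ (⇑e.symm)^[j] x ∈ A)) (t : ℕ) :
    MeasurableSet ((⇑e.symm)^[t] ⁻¹' A) ∧ Disc e M ((⇑e.symm)^[t] ⁻¹' A) ∧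
      ∀ x, ∃ j, j < M ∧
        ((⇑e)^[j] x ∈ (⇑e.symm)^[t] ⁻¹' A ∨ (⇑e.symm)^[j] x ∈ (⇑e.symm)^[t] ⁻¹' A) := by
  refine ⟨(meas_iter_symm e t) hAm, ?_, ?_⟩
  · intro x hx j hj0 hjM hy
    rw [Set.mem_preimage] at hx hy
    refine hAd _ hx j hj0 hjM ?_
    rw [iter_comm]
    exact hy
  · intro x
    obtain ⟨j, hj, hcase⟩ := hAc ((⇑e.symm)^[t] x)
    refine ⟨j, hj, ?_⟩
    rcases hcase with h | h
    · left
      rw [Set.mem_preimage, ← iter_comm]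
      exact h
    · right
      rw [Set.mem_preimage, ← Function.iterate_add_apply, add_comm,
        Function.iterate_add_apply]
      exact h

lemma translate_disjoint {M : ℕ} {A : Set X} (hAd : Disc e M A) {s t : ℕ}
    (hst : s < t) (htM : t - s < M) :
    Disjoint ((⇑e.symm)^[s] ⁻¹' A) ((⇑e.symm)^[t] ⁻¹' A) := by
  rw [Set.disjoint_left]
  intro x hs ht
  rw [Set.mem_preimage] at hs ht
  refine hAd _ ht (t - s) (by omega) htM ?_
  rw [iter_cancel e (by omega : t - s ≤ t), show t - (t - s) = s by omega]
  exact hs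

lemma hex_of_marker {M : ℕ} (hM : 1 ≤ M) {A : Set X}
    (hAc : ∀ x, ∃ j, j < M ∧ ((⇑e)^[j] x ∈ A ∨ (⇑e.symm)^[j] x ∈ A)) :
    ∀ x : X, ∃ j, (⇑e.symm)^[j] x ∈ A := by
  intro x
  obtain ⟨j, hj, hc⟩ := hAc ((⇑e.symm)^[M - 1] x)
  rcases hc with h | h
  · exact ⟨M - 1 - j, by rwa [iter_cancel e (by omega)] at h⟩
  · refine ⟨j + (M - 1), ?_⟩
    rwa [Function.iterate_add_apply]

lemma hex'_of_marker {M : ℕ} (hM : 1 ≤ M) {A : Set X}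
    (hAc : ∀ x, ∃ j, j < M ∧ ((⇑e)^[j] x ∈ A ∨ (⇑e.symm)^[j] x ∈ A)) :
    ∀ x : X, ∃ j, 0 < j ∧ j < 2 * M ∧ (⇑e)^[j] x ∈ A := by
  intro x
  obtain ⟨j, hj, hc⟩ := hAc ((⇑e)^[M] x)
  rcases hc with h | h
  · exact ⟨j + M, by omega, by omega, by rwa [Function.iterate_add_apply]⟩
  · exact ⟨M - j, by omega, by omega, by rwa [iter_cancel' e (by omega)] at h⟩

end Translate

lemma sum_pair_le {k : ℕ} (μ : Fin k → Measure X) (hμ : ∀ i, IsProbabilityMeasure (μ i))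
    (M : ℕ) (s : ℕ → Set X) (hm : ∀ t, MeasurableSet (s t))
    (hdisj : ∀ a b : ℕ, a < M → b < M → a ≠ b → Disjoint (s a) (s b))
    {g : X → X} (hg : Measurable g) :
    ∑ t ∈ Finset.range M, (∑ i, (μ i (s t) + μ i (g ⁻¹' (s t)))) ≤ (2 * k : ℝ≥0∞) := by
  rw [Finset.sum_comm]
  have hone : ∀ (i : Fin k) (f : ℕ → Set X), (∀ t, MeasurableSet (f t)) →
      (∀ a b : ℕ, a < M → b < M → a ≠ b → Disjoint (f a) (f b)) →
      ∑ t ∈ Finset.range M, μ i (f t) ≤ 1 := by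
    intro i f hfm hfd
    rw [← measure_biUnion_finset (fun a ha b hb hab =>
      hfd a b (Finset.mem_range.mp ha) (Finset.mem_range.mp hb) hab) (fun b _ => hfm b)]
    exact prob_le_one
  have hbound : ∀ i : Fin k,
      ∑ t ∈ Finset.range M, (μ i (s t) + μ i (g ⁻¹' (s t))) ≤ 2 := by
    intro i
    rw [Finset.sum_add_distrib]
    have h1 := hone i s hm hdisj
    have h2 := hone i (fun t => g ⁻¹' (s t)) (fun t => hg (hm t))
      (fun a b ha hb hab => (hdisj a b ha hb hab).preimage g)
    calc _ ≤ (1 : ℝ≥0∞) + 1 := add_le_add h1 h2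
      _ = 2 := by norm_num
  calc ∑ i, ∑ t ∈ Finset.range M, (μ i (s t) + μ i (g ⁻¹' (s t)))
      ≤ ∑ _i : Fin k, (2 : ℝ≥0∞) := Finset.sum_le_sum fun i _ => hbound i
    _ = (2 * k : ℝ≥0∞) := by
        rw [Finset.sum_const, Finset.card_univ, Fintype.card_fin, nsmul_eq_mul, mul_comm]

end Stmt5

open Stmt5 in
/-- **Rokhlin property in Borel dynamics (uniform topology).** Let `T, R` be aperiodic
Borel automorphisms of a standard Borel space. Then for every `ε > 0` and Borel
probability measures `μ₁, …, μ_k` there is a Borel automorphism `S` with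
`μᵢ(E(S⁻¹TS, R)) < ε` for all `i`, where `E(U, V) = {x : Ux ≠ Vx} ∪ {x : U⁻¹x ≠ V⁻¹x}`. -/
theorem stmt_5 {X : Type*} [MeasurableSpace X] [StandardBorelSpace X]
    (T R : X ≃ᵐ X)
    (hT : ∀ x : X, ∀ n : ℕ, 1 ≤ n → (T : X → X)^[n] x ≠ x)
    (hR : ∀ x : X, ∀ n : ℕ, 1 ≤ n → (R : X → X)^[n] x ≠ x)
    (ε : ℝ) (hε : 0 < ε) (k : ℕ) (μ : Fin k → Measure X)
    (hμ : ∀ i, IsProbabilityMeasure (μ i)) :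
    ∃ S : X ≃ᵐ X, ∀ i : Fin k,
      μ i ({x : X | S.symm (T (S x)) ≠ R x} ∪ {x : X | S.symm (T.symm (S x)) ≠ R.symm x})
        < ENNReal.ofReal ε := by
  classical
  rcases Nat.eq_zero_or_pos k with hk0 | hkpos
  · subst hk0; exact ⟨T, fun i => i.elim0⟩
  have hXne : Nonempty X := by
    by_contra hX
    have h1 : (μ ⟨0, hkpos⟩) Set.univ = 1 := (hμ _).measure_univ
    rw [Set.univ_eq_empty_iff.mpr (not_nonempty_iff.mp hX), measure_empty] at h1
    exact zero_ne_one h1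
  obtain ⟨x₀⟩ := hXne
  have hXinf : Infinite X := Infinite.of_injective (fun n : ℕ => (⇑T)^[n] x₀)
    (fun a b hab => ape_iter_inj hT hab)
  -- choose the threshold δ and the scale M
  set δ : ℝ≥0∞ := ENNReal.ofReal ε / 2 with hδdef
  have hδ0 : δ ≠ 0 := by
    rw [hδdef]
    intro h
    rw [ENNReal.div_eq_zero_iff] at h
    rcases h with h | h
    · rw [ENNReal.ofReal_eq_zero] at h; linarith
    · exact (by norm_num : (2 : ℝ≥0∞) ≠ ⊤) h
  have hδtop : δ ≠ ⊤ := by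
    rw [hδdef]
    exact (ENNReal.div_lt_top (by simp) (by simp)).ne
  obtain ⟨M0, hM0⟩ := ENNReal.exists_nat_gt
    ((ENNReal.div_lt_top (ENNReal.mul_ne_top (by norm_num) (ENNReal.natCast_ne_top k)) hδ0).ne :
      (2 * k : ℝ≥0∞) / δ ≠ ⊤)
  set M : ℕ := M0 + 1 with hMdef
  have hM1 : 1 ≤ M := by omega
  have hMbig : (2 * k : ℝ≥0∞) < M • δ := by
    rw [nsmul_eq_mul]
    refine (ENNReal.div_lt_iff (Or.inl hδ0) (Or.inl hδtop)).mp ?_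
    refine lt_of_lt_of_le hM0 ?_
    exact_mod_cast Nat.le_succ M0
  -- marker for R, translated to have small measure
  obtain ⟨A0, hA0m, hA0d, hA0c⟩ := exists_marker R hR M hM1
  set At : ℕ → Set X := fun t => (⇑R.symm)^[t] ⁻¹' A0 with hAtdef
  have hAtprop : ∀ t : ℕ, MeasurableSet (At t) ∧ Disc R M (At t) ∧
      ∀ x, ∃ j, j < M ∧ ((⇑R)^[j] x ∈ At t ∨ (⇑R.symm)^[j] x ∈ At t) :=
    fun t => marker_translate R hA0m hA0d hA0c t
  have hAtdisj : ∀ s t : ℕ, s < M → t < M → s ≠ t → Disjoint (At s) (At t) := by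
    intro s t hs ht hst
    rcases Nat.lt_or_ge s t with h | h
    · exact translate_disjoint R hA0d h (by omega)
    · exact (translate_disjoint R hA0d (by omega : t < s) (by omega)).symm
  have hsum : ∑ t ∈ Finset.range M, (∑ i, (μ i (At t) + μ i ((⇑R) ⁻¹' (At t))))
      ≤ (2 * k : ℝ≥0∞) :=
    sum_pair_le μ hμ M At (fun t => (hAtprop t).1) hAtdisj R.measurable
  obtain ⟨t0, ht0M, ht0⟩ := pigeonhole hsum hMbig
  obtain ⟨hAm, hAd, hAc⟩ := hAtprop t0
  set A : Set X := At t0 with hAdef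
  -- level functions for the marker A
  have hex : ∀ x : X, ∃ j, (⇑R.symm)^[j] x ∈ A := hex_of_marker R hM1 hAc
  have hex'b := hex'_of_marker R hM1 hAc
  have hex' : ∀ x : X, ∃ j, 0 < j ∧ (⇑R)^[j] x ∈ A := fun x =>
    ⟨(hex'b x).choose, (hex'b x).choose_spec.1, (hex'b x).choose_spec.2.2⟩
  have hglt : ∀ x, gfun R hex' x < 2 * M := by
    intro x
    obtain ⟨j, h1, h2, h3⟩ := hex'b x
    exact lt_of_le_of_lt (gfun_le R hex' h1 h3) h2
  have hgge : ∀ a ∈ A, M ≤ gfun R hex' a := fun a ha => gfun_ge R hex' hAd ha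
  -- the discrete set for T and the tower bases
  set M₂ : ℕ := 4 * M * M + 1 with hM₂def
  obtain ⟨D, hDm, hDd, hDbig⟩ := exists_big_disc T hT M₂ (by omega)
  obtain ⟨eD⟩ := big_iso_prod hDm hDbig
  set u : ℕ → X → X := fun L z => ((eD.symm (L, z)) : X) with hudef
  have hum : ∀ L, Measurable (u L) := fun L =>
    measurable_subtype_coe.comp (eD.symm.measurable.comp measurable_prodMk_left)
  have humem : ∀ L z, u L z ∈ D := fun L z => (eD.symm (L, z)).2
  have hudisj : ∀ L L' z z', u L z = u L' z' → L = L' ∧ z = z' := by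
    intro L L' z z' h
    have h3 := eD.symm.injective (Subtype.ext h)
    exact ⟨congrArg Prod.fst h3, congrArg Prod.snd h3⟩
  have huinj : ∀ L, Function.Injective (u L) := fun L z z' h => (hudisj L L z z' h).2
  set o : ℕ → ℕ := fun L => 1 + L * L with hodef
  have hbnd : ∀ L i : ℕ, i < L → L < 2*M → o L + i < M₂ := by
    intro L i hi hL
    simp only [hodef, hM₂def]
    nlinarith
  -- disjointness of the T-tower levels
  have hlevel : ∀ L i L' i' z z', i < L → L < 2*M → i' < L' → L' < 2*M →
      (⇑T)^[o L + i] (u L z) = (⇑T)^[o L' + i'] (u L' z') → L = L' ∧ i = i' ∧ z = z' := by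
    have key : ∀ (a b a' b' : ℕ) (y y' : X), b < a → a < 2*M → b' < a' → a' < 2*M →
        o a + b ≤ o a' + b' →
        (⇑T)^[o a + b] (u a y) = (⇑T)^[o a' + b'] (u a' y') →
        a = a' ∧ b = b' ∧ y = y' := by
      intro a b a' b' y y' hba ha2M hba' ha'2M hle heq
      have heq2 : (⇑T)^[o a + b] (u a y)
          = (⇑T)^[o a + b] ((⇑T)^[(o a' + b') - (o a + b)] (u a' y')) := by
        rw [← Function.iterate_add_apply,
          show (o a + b) + ((o a' + b') - (o a + b)) = o a' + b' by omega]
        exact heq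
      have hcanc : u a y = (⇑T)^[(o a' + b') - (o a + b)] (u a' y') :=
        (Function.Injective.iterate T.injective _) heq2
      by_cases hd0 : (o a' + b') - (o a + b) = 0
      · rw [hd0, Function.iterate_zero_apply] at hcanc
        obtain ⟨haa', hyy'⟩ := hudisj _ _ _ _ hcanc
        have hoeq : o a + b = o a' + b' := by omega
        simp only [hodef] at hoeq
        obtain ⟨h1, h2⟩ := off_inj hba hba' hoeq
        exact ⟨h1, h2, hyy'⟩
      · exfalso
        have hlt : (o a' + b') - (o a + b) < M₂ :=
          lt_of_le_of_lt (by omega) (hbnd a' b' hba' ha'2M)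
        refine hDd (u a' y') (humem _ _) _ (by omega) hlt ?_
        rw [← hcanc]
        exact humem a y
    intro L i L' i' z z' hiL hL2M hiL' hL'2M heq
    rcases le_total (o L + i) (o L' + i') with h | h
    · exact key L i L' i' z z' hiL hL2M hiL' hL'2M h heq
    · obtain ⟨h1, h2, h3⟩ := key L' i' L i z' z hiL' hL'2M hiL hL2M h heq.symm
      exact ⟨h1.symm, h2.symm, h3.symm⟩
  have hlevel2 : ∀ L i z y, i < L → L < 2*M →
      (⇑T)^[o L + i] (u L z) ≠ u 0 y := by
    intro L i z y hi hL heq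
    refine hDd (u L z) (humem _ _) (o L + i) (by simp only [hodef]; omega) (hbnd L i hi hL) ?_
    rw [heq]
    exact humem 0 y
  -- the R-tower bases, with a big one
  set Fl : ℕ → Set X := fun L => A ∩ (gfun R hex') ⁻¹' {L} with hFldef
  have hFlm : ∀ L, MeasurableSet (Fl L) := fun L =>
    hAm.inter ((gfun_meas R hex' hAm) (measurableSet_singleton L))
  obtain ⟨Lst, hLstM, hLst2M, hFbig⟩ : ∃ L, M ≤ L ∧ L < 2*M ∧ Big X (Fl L) := by
    have hcover : (Set.univ : Set X) ⊆ ⋃ p ∈ (Finset.Icc M (2*M-1)) ×ˢ (Finset.range (2*M)),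
        {x | gfun R hex' (basefun R hex x) = p.1 ∧ bfun R hex x = p.2} := by
      intro x _
      simp only [Set.mem_iUnion, Finset.mem_product, Finset.mem_Icc, Finset.mem_range,
        Set.mem_setOf_eq, exists_prop]
      refine ⟨(gfun R hex' (basefun R hex x), bfun R hex x), ⟨⟨?_, ?_⟩, ?_⟩, rfl, rfl⟩
      · exact hgge _ (basefun_mem R hex x)
      · have := hglt (basefun R hex x); omega
      · have h1 := bfun_lt_gfun R hex hex' x
        have h2 := hglt (basefun R hex x)
        omega
    obtain ⟨p, hpmem, hpbig⟩ := big_biUnion (Big.mono hcover big_univ)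
    rw [Finset.mem_product, Finset.mem_Icc, Finset.mem_range] at hpmem
    refine ⟨p.1, hpmem.1.1, by omega, ?_⟩
    have hsub : {x | gfun R hex' (basefun R hex x) = p.1 ∧ bfun R hex x = p.2}
        ⊆ (⇑R)^[p.2] '' (Fl p.1) := by
      intro x hx
      refine ⟨basefun R hex x, ⟨basefun_mem R hex x, hx.1⟩, ?_⟩
      rw [← hx.2]
      exact iter_apply_basefun R hex x
    exact big_of_image (Function.Injective.iterate R.injective p.2) (Big.mono hsub hpbig)
  -- split the big base into pieces, choose a small one
  obtain ⟨eF⟩ := big_iso_prod (hFlm Lst) hFbig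
  set w : ℕ → X → X := fun j z => ((eF.symm (j, z)) : X) with hwdef
  have hwm : ∀ j, Measurable (w j) := fun j =>
    measurable_subtype_coe.comp (eF.symm.measurable.comp measurable_prodMk_left)
  have hwdisj : ∀ j j' z z', w j z = w j' z' → j = j' ∧ z = z' := by
    intro j j' z z' h
    have h2 := eF.symm.injective (Subtype.ext h)
    exact ⟨congrArg Prod.fst h2, congrArg Prod.snd h2⟩
  have hwinj : ∀ j, Function.Injective (w j) := fun j z z' h => (hwdisj j j z z' h).2
  set Pj : ℕ → Set X := fun j => Set.range (w j) with hPjdef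
  have hPjm : ∀ j, MeasurableSet (Pj j) :=
    fun j => ((hwm j).measurableEmbedding (hwinj j)).measurableSet_range
  have hPjF : ∀ j, Pj j ⊆ Fl Lst := by
    rintro j x ⟨z, rfl⟩
    exact (eF.symm (j, z)).2
  have hPjdis : ∀ a b : ℕ, a ≠ b → Disjoint (Pj a) (Pj b) := by
    intro a b hab
    rw [Set.disjoint_left]
    rintro x ⟨z, rfl⟩ ⟨z', hz'⟩
    exact hab ((hwdisj b a z' z hz').1).symm
  set colPj : ℕ → Set X := fun j => (basefun R hex) ⁻¹' (Pj j) with hcolPjdef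
  have hcolPjm : ∀ j, MeasurableSet (colPj j) :=
    fun j => (basefun_meas R hex hAm) (hPjm j)
  have hsum2 : ∑ j ∈ Finset.range M, (∑ i, (μ i (colPj j) + μ i ((⇑R.symm) ⁻¹' (colPj j))))
      ≤ (2 * k : ℝ≥0∞) :=
    sum_pair_le μ hμ M colPj hcolPjm
      (fun a b _ _ hab => ((hPjdis a b hab).preimage _)) R.symm.measurable
  obtain ⟨j0, hj0M, hj0⟩ := pigeonhole hsum2 hMbig
  set P : Set X := Pj j0 with hPdef
  set colP : Set X := colPj j0 with hcolPdef
  have hcolPmem : ∀ x : X, x ∈ colP ↔ basefun R hex x ∈ P := fun x => Iff.rfl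
  have hPcolP : P ⊆ colP := by
    intro a ha
    have haA : a ∈ A := (hPjF j0 ha).1
    rw [hcolPmem, basefun_of_mem R hex haA]
    exact ha
  have hcolPbig : Big X colP := Big.mono hPcolP (big_range (hwinj j0))
  -- the structured map and its range
  set σf : X → X := fun x => (⇑T)^[o (gfun R hex' (basefun R hex x)) + bfun R hex x]
      (u (gfun R hex' (basefun R hex x)) (basefun R hex x)) with hσfdef
  set ranσ : Set X := ⋃ L ∈ Finset.Icc M (2*M-1), ⋃ i ∈ Finset.range L,
      (⇑T)^[o L + i] '' (u L '' (Fl L \ P)) with hranσdef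
  have hranσm : MeasurableSet ranσ := by
    refine MeasurableSet.biUnion (Set.to_countable _) fun L _ => ?_
    refine MeasurableSet.biUnion (Set.to_countable _) fun i _ => ?_
    rw [iter_image T]
    exact (meas_iter_symm T _)
      (((hum L).measurableEmbedding (huinj L)).measurableSet_image.mpr
        ((hFlm L).diff (hPjm j0)))
  set Zran : Set X := Set.univ \ ranσ with hZrandef
  have hZranm : MeasurableSet Zran := MeasurableSet.univ.diff hranσm
  have hσmem : ∀ x, x ∉ colP → σf x ∈ ranσ := by
    intro x hx
    simp only [hranσdef, Set.mem_iUnion, Finset.mem_Icc, Finset.mem_range, exists_prop]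
    refine ⟨gfun R hex' (basefun R hex x), ⟨hgge _ (basefun_mem R hex x), by
      have := hglt (basefun R hex x); omega⟩, bfun R hex x,
      bfun_lt_gfun R hex hex' x, ?_⟩
    exact ⟨u _ (basefun R hex x),
      ⟨basefun R hex x, ⟨⟨basefun_mem R hex x, rfl⟩, fun hc => hx hc⟩, rfl⟩, rfl⟩
  have hZbig : Big X Zran := by
    refine Big.mono ?_ (big_range (huinj 0))
    rintro y ⟨z, rfl⟩
    refine ⟨Set.mem_univ _, fun hy => ?_⟩
    simp only [hranσdef, Set.mem_iUnion, Finset.mem_Icc, Finset.mem_range, exists_prop] at hy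
    obtain ⟨L, hL, i, hi, hmem⟩ := hy
    obtain ⟨d, hd, hdeq⟩ := hmem
    obtain ⟨a, _, rfl⟩ := hd
    exact hlevel2 L i a z hi (by omega) hdeq
  obtain ⟨v⟩ := big_iso (hcolPjm j0) hZranm hcolPbig hZbig
  set Sf : X → X := fun x => if h : x ∈ colP then ((v ⟨x, h⟩ : X)) else σf x with hSfdef
  have hSfcol : ∀ (x : X) (h : x ∈ colP), Sf x = (v ⟨x, h⟩ : X) := by
    intro x h
    simp only [hSfdef, dif_pos h]
  have hSfnot : ∀ (x : X), x ∉ colP → Sf x = σf x := by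
    intro x h
    simp only [hSfdef, dif_neg h]
  have hvmem : ∀ (z : ↥colP), ((v z : X)) ∈ Zran := fun z => (v z).2
  have hSinj : Function.Injective Sf := by
    intro x y hxy
    by_cases hx : x ∈ colP <;> by_cases hy : y ∈ colP
    · rw [hSfcol x hx, hSfcol y hy] at hxy
      have h2 := v.injective (Subtype.ext hxy)
      exact congrArg Subtype.val h2
    · exfalso
      rw [hSfcol x hx, hSfnot y hy] at hxy
      exact (hxy ▸ hvmem ⟨x, hx⟩).2 (hσmem y hy)
    · exfalso
      rw [hSfnot x hx, hSfcol y hy] at hxy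
      exact (hxy.symm ▸ hvmem ⟨y, hy⟩).2 (hσmem x hx)
    · rw [hSfnot x hx, hSfnot y hy, hσfdef] at hxy
      simp only at hxy
      obtain ⟨hLL, hii, hzz⟩ := hlevel _ _ _ _ _ _ (bfun_lt_gfun R hex hex' x)
        (hglt _) (bfun_lt_gfun R hex hex' y) (hglt _) hxy
      have h1 := iter_apply_basefun R hex x
      have h2 := iter_apply_basefun R hex y
      rw [← h1, ← h2, hzz, hii]
  have hSsurj : Function.Surjective Sf := by
    intro y
    by_cases hy : y ∈ ranσ
    · simp only [hranσdef, Set.mem_iUnion, Finset.mem_Icc, Finset.mem_range, exists_prop] at hy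
      obtain ⟨L, hL, i, hi, hmem⟩ := hy
      obtain ⟨d, hd, rfl⟩ := hmem
      obtain ⟨a, ha, rfl⟩ := hd
      have haA : a ∈ A := ha.1.1
      have hgfa : gfun R hex' a = L := ha.1.2
      have hilt : i < gfun R hex' a := by rw [hgfa]; exact hi
      obtain ⟨hbf, hbase⟩ := base_iter R hex hex' haA hilt
      refine ⟨(⇑R)^[i] a, ?_⟩
      have hnotcol : (⇑R)^[i] a ∉ colP := by
        intro hc
        rw [hcolPmem, hbase] at hc
        exact ha.2 hc
      rw [hSfnot _ hnotcol, hσfdef]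
      simp only
      rw [hbase, hbf, hgfa]
    · have hyZ : y ∈ Zran := ⟨Set.mem_univ _, hy⟩
      refine ⟨(v.symm ⟨y, hyZ⟩ : X), ?_⟩
      rw [hSfcol _ (v.symm ⟨y, hyZ⟩).2]
      exact congrArg Subtype.val (v.apply_symm_apply ⟨y, hyZ⟩)
  -- measurability of Sf
  have hσmeas : Measurable σf := by
    set f2 : ℕ → X → X := fun n x =>
      (⇑T)^[o n.unpair.1 + n.unpair.2] (u n.unpair.1 (basefun R hex x)) with hf2
    set g2 : X → ℕ := fun x =>
      Nat.pair (gfun R hex' (basefun R hex x)) (bfun R hex x) with hg2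
    have hf2m : ∀ n, Measurable (f2 n) := fun n =>
      (meas_iter T _).comp ((hum _).comp (basefun_meas R hex hAm))
    have hg2m : Measurable g2 := by
      have hbm := bfun_meas R hex hAm
      have hgbm := (gfun_meas R hex' hAm).comp (basefun_meas R hex hAm)
      refine measurable_to_nat fun y => ?_
      have hset : g2 ⁻¹' {g2 y} =
          ((fun x => gfun R hex' (basefun R hex x)) ⁻¹'
            {gfun R hex' (basefun R hex y)}) ∩
          ((bfun R hex) ⁻¹' {bfun R hex y}) := by
        ext x
        simp only [hg2, Set.mem_preimage, Set.mem_singleton_iff, Set.mem_inter_iff,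
          Nat.pair_eq_pair]
      rw [hset]
      exact (hgbm (measurableSet_singleton _)).inter (hbm (measurableSet_singleton _))
    have heq : σf = fun x => f2 (g2 x) x := by
      funext x
      simp only [hf2, hg2, hσfdef, Nat.unpair_pair]
    rw [heq]
    exact measurable_nat_cases hf2m hg2m
  have hSmeas : Measurable Sf := by
    rw [hSfdef]
    refine Measurable.dite (s := colP) (f := fun p : ↥colP => (v p : X))
      (g := fun p : ↥(colPᶜ) => σf (p : X)) ?_ ?_ (hcolPjm j0)
    · exact measurable_subtype_coe.comp v.measurable
    · exact hσmeas.comp measurable_subtype_coe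
  obtain ⟨S, hScoe⟩ := measEquiv_of_bijective Sf hSmeas ⟨hSinj, hSsurj⟩
  refine ⟨S, ?_⟩
  intro i
  -- the conjugation identity on the good set
  have hgood : ∀ x, (⇑R) x ∉ A → x ∉ colP → Sf (R x) = T (Sf x) := by
    intro x hRx hcol
    obtain ⟨hb, hbase⟩ := bfun_step R hex hRx
    have hRcol : (⇑R) x ∉ colP := by
      intro hc
      rw [hcolPmem, hbase] at hc
      exact hcol hc
    rw [hSfnot _ hRcol, hSfnot _ hcol, hσfdef]
    simp only
    rw [hb, hbase, show o (gfun R hex' (basefun R hex x)) + (bfun R hex x + 1)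
      = (o (gfun R hex' (basefun R hex x)) + bfun R hex x) + 1 by omega,
      Function.iterate_succ_apply']
  have hcontain : ({x : X | S.symm (T (S x)) ≠ R x}
        ∪ {x : X | S.symm (T.symm (S x)) ≠ R.symm x})
      ⊆ ((⇑R) ⁻¹' A ∪ colP) ∪ (A ∪ (⇑R.symm) ⁻¹' colP) := by
    intro x hx
    by_contra hc
    simp only [Set.mem_union, Set.mem_preimage, not_or] at hc
    obtain ⟨⟨h1, h2⟩, h3, h4⟩ := hc
    have hfirst : S.symm (T (S x)) = R x := by
      have hg := hgood x h1 h2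
      have hTS : T (S x) = S (R x) := by
        rw [hScoe]
        exact hg.symm
      rw [hTS, S.symm_apply_apply]
    have hsecond : S.symm (T.symm (S x)) = R.symm x := by
      have hRy : R (R.symm x) = x := R.apply_symm_apply x
      have hg := hgood (R.symm x) (by rw [hRy]; exact h3) h4
      rw [hRy] at hg
      have hTS : T.symm (S x) = S (R.symm x) := by
        rw [hScoe, hg, T.symm_apply_apply]
      rw [hTS, S.symm_apply_apply]
    rcases hx with hx | hx
    · exact hx hfirst
    · exact hx hsecond
  -- the measure estimate
  have hsingle1 : μ i A + μ i ((⇑R) ⁻¹' A)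
      ≤ ∑ i', (μ i' A + μ i' ((⇑R) ⁻¹' A)) :=
    Finset.single_le_sum (f := fun i' => μ i' A + μ i' ((⇑R) ⁻¹' A))
      (fun _ _ => zero_le) (Finset.mem_univ i)
  have hsingle2 : μ i colP + μ i ((⇑R.symm) ⁻¹' colP)
      ≤ ∑ i', (μ i' colP + μ i' ((⇑R.symm) ⁻¹' colP)) :=
    Finset.single_le_sum (f := fun i' => μ i' colP + μ i' ((⇑R.symm) ⁻¹' colP))
      (fun _ _ => zero_le) (Finset.mem_univ i)
  calc μ i ({x : X | S.symm (T (S x)) ≠ R x}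
        ∪ {x : X | S.symm (T.symm (S x)) ≠ R.symm x})
      ≤ μ i (((⇑R) ⁻¹' A ∪ colP) ∪ (A ∪ (⇑R.symm) ⁻¹' colP)) := measure_mono hcontain
    _ ≤ (μ i ((⇑R) ⁻¹' A) + μ i colP) + (μ i A + μ i ((⇑R.symm) ⁻¹' colP)) :=
        le_trans (measure_union_le _ _)
          (add_le_add (measure_union_le _ _) (measure_union_le _ _))
    _ = (μ i A + μ i ((⇑R) ⁻¹' A)) + (μ i colP + μ i ((⇑R.symm) ⁻¹' colP)) := by
        ring
    _ < δ + δ :=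
        ENNReal.add_lt_add (lt_of_le_of_lt hsingle1 ht0) (lt_of_le_of_lt hsingle2 hj0)
    _ = ENNReal.ofReal ε := by
        rw [hδdef]
        exact ENNReal.add_halves _
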